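/- arXiv:1509.02570 — 6 statements merged into one kernel-verified Lean document; each statement's English description precedes it below -/
import Mathlib

section
/- Let q, q_d ∈ ℝ³ with ‖q‖ = ‖q_d‖ = 1, and define the error function Ψ = 1 − q·q_d and the direction error e_q = q_d × q. Then (i) (1/2)‖e_q‖² ≤ Ψ, and (ii) for any constant 0 < ψ_q < 2, if Ψ < ψ_q then Ψ ≤ ‖e_q‖² / (2 − ψ_q). -/
noncomputable section

open scoped BigOperators

/-- ℝ³ as `Fin 3 → ℝ`. -/
abbrev V3 : Type := Fin 3 → ℝ

/-- Euclidean inner product on ℝ³. -/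
def dot3 (a b : V3) : ℝ := ∑ i, a i * b i

/-- Euclidean norm on ℝ³. -/
def norm3 (a : V3) : ℝ := Real.sqrt (dot3 a a)

/-- Cross product on ℝ³. -/
def cross3 (a b : V3) : V3 :=
  ![a 1 * b 2 - a 2 * b 1, a 2 * b 0 - a 0 * b 2, a 0 * b 1 - a 1 * b 0]

/-- The third standard basis vector. -/
def e3 : V3 := ![0, 0, 1]

/-- bounds relating the error function `Ψ = 1 - q·q_d` and the
direction error `e_q = q_d × q` for unit vectors on the two-sphere. -/
theorem error_function_bounds (q qd : V3) (hq : norm3 q = 1) (hqd : norm3 qd = 1) :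
    (1 / 2) * norm3 (cross3 qd q) ^ 2 ≤ 1 - dot3 q qd ∧
      ∀ ψq : ℝ, 0 < ψq → ψq < 2 → 1 - dot3 q qd < ψq →
        1 - dot3 q qd ≤ norm3 (cross3 qd q) ^ 2 / (2 - ψq) := by
  have hqq : dot3 q q = 1 := by
    have h0 : 0 ≤ dot3 q q := by
      unfold dot3; exact Finset.sum_nonneg fun i _ => mul_self_nonneg _
    have := congrArg (· ^ 2) hq
    simpa [norm3, Real.sq_sqrt h0] using this
  have hdd : dot3 qd qd = 1 := by
    have h0 : 0 ≤ dot3 qd qd := by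
      unfold dot3; exact Finset.sum_nonneg fun i _ => mul_self_nonneg _
    have := congrArg (· ^ 2) hqd
    simpa [norm3, Real.sq_sqrt h0] using this
  have hc0 : 0 ≤ dot3 (cross3 qd q) (cross3 qd q) := by
    unfold dot3; exact Finset.sum_nonneg fun i _ => mul_self_nonneg _
  have hnsq : norm3 (cross3 qd q) ^ 2 = dot3 (cross3 qd q) (cross3 qd q) := by
    simp [norm3, Real.sq_sqrt hc0]
  have hlag : dot3 (cross3 qd q) (cross3 qd q)
      = dot3 qd qd * dot3 q q - (dot3 q qd) ^ 2 := by
    simp only [dot3, cross3, Fin.sum_univ_three]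
    simp [Matrix.cons_val_zero, Matrix.cons_val_one, Matrix.head_cons]
    ring
  rw [hnsq, hlag, hqq, hdd]
  set c := dot3 q qd with hcdef
  have hc1 : -1 ≤ c := by nlinarith [hc0, hlag, hqq, hdd]
  have hc2 : c ≤ 1 := by nlinarith [hc0, hlag, hqq, hdd]
  constructor
  · nlinarith
  · intro ψq hψ0 hψ2 hlt
    rw [le_div_iff₀ (by linarith)]
    nlinarith
end
end

section
/- Let q, q_d, ω, ω_d ∈ ℝ³ with ‖q‖ = ‖q_d‖ = 1, q·ω = 0, q_d·ω_d = 0. Define Ψ = 1 − q·q_d, e_q = q_d × q, e_ω = ω + q̂²ω_d, and for constants k_q, c_q > 0 the Lyapunov function V_q = (1/2)‖e_ω‖² + c_q (e_ω·e_q) + k_q Ψ. Then (i) V_q ≥ (k_q/2)‖e_q‖² − c_q ‖e_q‖‖e_ω‖ + (1/2)‖e_ω‖², and (ii) for any constant 0 < ψ_q < 2, if Ψ < ψ_q then V_q ≤ (k_q/(2 − ψ_q))‖e_q‖² + c_q ‖e_q‖‖e_ω‖ + (1/2)‖e_ω‖². -/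
noncomputable section

open scoped BigOperators

lemma dot3_self_nonneg (a : V3) : 0 ≤ dot3 a a := by
  simp only [dot3, Fin.sum_univ_three]
  nlinarith [sq_nonneg (a 0), sq_nonneg (a 1), sq_nonneg (a 2)]

lemma norm3_nonneg (a : V3) : 0 ≤ norm3 a := Real.sqrt_nonneg _

lemma norm3_sq (a : V3) : norm3 a ^ 2 = dot3 a a := Real.sq_sqrt (dot3_self_nonneg a)

lemma cauchy3 (a b : V3) : (dot3 a b) ^ 2 ≤ dot3 a a * dot3 b b := by
  simp only [dot3, Fin.sum_univ_three]
  nlinarith [sq_nonneg (a 0 * b 1 - a 1 * b 0), sq_nonneg (a 0 * b 2 - a 2 * b 0),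
    sq_nonneg (a 1 * b 2 - a 2 * b 1)]

lemma abs_dot3_le (a b : V3) : |dot3 a b| ≤ norm3 a * norm3 b := by
  have h := cauchy3 a b
  have := norm3_sq a; have := norm3_sq b
  have ha := norm3_nonneg a; have hb := norm3_nonneg b
  rw [abs_le]
  constructor <;>
    nlinarith [mul_nonneg ha hb, sq_nonneg (norm3 a * norm3 b - dot3 a b),
      sq_nonneg (norm3 a * norm3 b + dot3 a b)]

lemma cross3_norm_sq (a b : V3) :
    dot3 (cross3 a b) (cross3 a b) = dot3 a a * dot3 b b - (dot3 a b) ^ 2 := by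
  simp only [dot3, cross3, Fin.sum_univ_three, Matrix.cons_val_zero, Matrix.cons_val_one,
    Matrix.head_cons, Matrix.cons_val_two, Matrix.tail_cons]
  ring

/-- quadratic sandwich bounds for the Lyapunov function
`V_q = (1/2)‖e_ω‖² + c_q e_ω·e_q + k_q Ψ` used in the link-direction
tracking controller. -/
theorem lyapunov_sandwich_bounds (q qd ω ωd : V3)
    (hq : norm3 q = 1) (hqd : norm3 qd = 1)
    (hqω : dot3 q ω = 0) (hqdωd : dot3 qd ωd = 0)
    (kq cq : ℝ) (hkq : 0 < kq) (hcq : 0 < cq) :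
    (kq / 2) * norm3 (cross3 qd q) ^ 2
        - cq * norm3 (cross3 qd q) * norm3 (ω + cross3 q (cross3 q ωd))
        + (1 / 2) * norm3 (ω + cross3 q (cross3 q ωd)) ^ 2
      ≤ (1 / 2) * norm3 (ω + cross3 q (cross3 q ωd)) ^ 2
          + cq * dot3 (ω + cross3 q (cross3 q ωd)) (cross3 qd q)
          + kq * (1 - dot3 q qd) ∧
      ∀ ψq : ℝ, 0 < ψq → ψq < 2 → 1 - dot3 q qd < ψq →
        (1 / 2) * norm3 (ω + cross3 q (cross3 q ωd)) ^ 2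
            + cq * dot3 (ω + cross3 q (cross3 q ωd)) (cross3 qd q)
            + kq * (1 - dot3 q qd)
          ≤ (kq / (2 - ψq)) * norm3 (cross3 qd q) ^ 2
              + cq * norm3 (cross3 qd q) * norm3 (ω + cross3 q (cross3 q ωd))
              + (1 / 2) * norm3 (ω + cross3 q (cross3 q ωd)) ^ 2 := by
  set eq := cross3 qd q with heq
  set eω := ω + cross3 q (cross3 q ωd) with heω
  set c := dot3 q qd with hc
  set a := norm3 eq with ha
  set b := norm3 eω with hb
  set d := dot3 eω eq with hd
  have hqq : dot3 q q = 1 := by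
    have := norm3_sq q; rw [hq] at this; linarith
  have hqdqd : dot3 qd qd = 1 := by
    have := norm3_sq qd; rw [hqd] at this; linarith
  have hdotsym : dot3 qd q = dot3 q qd := by
    simp only [dot3, Fin.sum_univ_three]; ring
  have ha2 : a ^ 2 = 1 - c ^ 2 := by
    rw [ha, norm3_sq, heq, cross3_norm_sq, hqq, hqdqd, hdotsym, hc]; ring
  have ha0 : 0 ≤ a := norm3_nonneg _
  have hb0 : 0 ≤ b := norm3_nonneg _
  have hdab : |d| ≤ b * a := abs_dot3_le _ _
  have hd1 : d ≤ a * b := by rw [abs_le] at hdab; linarith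
  have hd2 : -(a * b) ≤ d := by rw [abs_le] at hdab; linarith
  have hc2 : c ^ 2 ≤ 1 := by nlinarith
  have hc1 : c ≤ 1 := by nlinarith
  have hcm1 : -1 ≤ c := by nlinarith
  constructor
  · nlinarith [mul_nonneg hkq.le (mul_nonneg (by linarith : (0:ℝ) ≤ 1 - c)
      (by linarith : (0:ℝ) ≤ 1 - c))]
  · intro ψq hψ0 hψ2 hΨ
    have h2ψ : 0 < 2 - ψq := by linarith
    have hkey : kq * (1 - c) ≤ kq / (2 - ψq) * a ^ 2 := by
      rw [div_mul_eq_mul_div, le_div_iff₀ h2ψ, ha2]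
      nlinarith [mul_nonneg hkq.le (by linarith : (0:ℝ) ≤ 1 - c)]
    nlinarith
end
end

section
/- Let q, q_d, ω, ω_d : ℝ → ℝ³ be differentiable with ‖q(t)‖ = ‖q_d(t)‖ = 1, q·ω = 0, q_d·ω_d = 0, q̇ = ω × q, and q̇_d = ω_d × q_d. Let α ∈ ℝ, β ≠ 0, k_q, k_ω > 0. Define e_q = q_d × q and e_ω = ω + q̂²ω_d, and let u ∈ ℝ³ (possibly time-dependent) be of the form u = u∥ + u⊥ where u∥ is parallel to q and u⊥ = −(1/β) q̂ { −k_q e_q − k_ω e_ω − (q·ω_d) q̇ − q̂² ω̇_d − α q̂ e₃ }. If ω̇ = α q × e₃ + β q × u, then ω̇ = −k_q e_q − k_ω e_ω − (q·ω_d) q̇ − q̂² ω̇_d. -/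
noncomputable section

open scoped BigOperators

lemma cross3_add_right' (a b c : V3) : cross3 a (b + c) = cross3 a b + cross3 a c := by
  funext i; fin_cases i <;> simp [cross3] <;> ring

lemma cross3_smul_right' (a : V3) (r : ℝ) (b : V3) : cross3 a (r • b) = r • cross3 a b := by
  funext i; fin_cases i <;> simp [cross3] <;> ring

lemma cross3_self' (a : V3) : cross3 a a = 0 := by
  funext i; fin_cases i <;> simp [cross3] <;> ring

lemma cross3_triple' (a b : V3) : cross3 a (cross3 a b) = dot3 a b • a - dot3 a a • b := by
  funext i; fin_cases i <;> simp [cross3, dot3, Fin.sum_univ_three] <;> ring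

/-- substituting the transverse control
`u⊥ = −(1/β) q̂ {−k_q e_q − k_ω e_ω − (q·ω_d) q̇ − q̂² ω̇_d − α q̂ e₃}` (plus any
component parallel to `q`) into the link dynamics `ω̇ = α q × e₃ + β q × u`
yields `ω̇ = −k_q e_q − k_ω e_ω − (q·ω_d) q̇ − q̂² ω̇_d`. -/
theorem closed_loop_link_dynamics (q ω qd ωd : ℝ → V3)
    (hq : Differentiable ℝ q) (hω : Differentiable ℝ ω)
    (hqd : Differentiable ℝ qd) (hωd : Differentiable ℝ ωd)
    (hqu : ∀ t, norm3 (q t) = 1) (hqdu : ∀ t, norm3 (qd t) = 1)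
    (hqω : ∀ t, dot3 (q t) (ω t) = 0) (hqdωd : ∀ t, dot3 (qd t) (ωd t) = 0)
    (hkin : ∀ t, deriv q t = cross3 (ω t) (q t))
    (hkind : ∀ t, deriv qd t = cross3 (ωd t) (qd t))
    (α β kq kw : ℝ) (hβ : β ≠ 0) (hkq : 0 < kq) (hkw : 0 < kw)
    (upar uperp u : ℝ → V3)
    (hupar : ∀ t, ∃ c : ℝ, upar t = c • q t)
    (huperp : ∀ t, uperp t =
      (-(1 / β)) • cross3 (q t)
        ((-kq) • cross3 (qd t) (q t)
          - kw • (ω t + cross3 (q t) (cross3 (q t) (ωd t)))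
          - dot3 (q t) (ωd t) • deriv q t
          - cross3 (q t) (cross3 (q t) (deriv ωd t))
          - α • cross3 (q t) e3))
    (hu : ∀ t, u t = upar t + uperp t)
    (hode : ∀ t, deriv ω t = α • cross3 (q t) e3 + β • cross3 (q t) (u t)) :
    ∀ t : ℝ, deriv ω t =
      (-kq) • cross3 (qd t) (q t)
        - kw • (ω t + cross3 (q t) (cross3 (q t) (ωd t)))
        - dot3 (q t) (ωd t) • deriv q t
        - cross3 (q t) (cross3 (q t) (deriv ωd t)) := by
  intro t
  have hnn : 0 ≤ dot3 (q t) (q t) := by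
    simp only [dot3, Fin.sum_univ_three]
    nlinarith [sq_nonneg (q t 0), sq_nonneg (q t 1), sq_nonneg (q t 2)]
  have h1 : dot3 (q t) (q t) = 1 := by
    have h := hqu t
    rw [norm3] at h
    nlinarith [Real.sq_sqrt hnn]
  have h2 : q t 0 * ω t 0 + q t 1 * ω t 1 + q t 2 * ω t 2 = 0 := by
    simpa [dot3, Fin.sum_univ_three] using hqω t
  set X : V3 := (-kq) • cross3 (qd t) (q t)
          - kw • (ω t + cross3 (q t) (cross3 (q t) (ωd t)))
          - dot3 (q t) (ωd t) • deriv q t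
          - cross3 (q t) (cross3 (q t) (deriv ωd t))
          - α • cross3 (q t) e3 with hXdef
  have hdotX : dot3 (q t) X = 0 := by
    rw [hXdef, hkin t]
    simp only [dot3, cross3, e3, Fin.sum_univ_three, Pi.sub_apply, Pi.add_apply,
      Pi.smul_apply, smul_eq_mul, Matrix.cons_val_zero, Matrix.cons_val_one,
      Matrix.head_cons, Matrix.cons_val_two, Matrix.tail_cons]
    linear_combination (-kw) * h2
  obtain ⟨c, hc⟩ := hupar t
  have hββ : β * -(1 / β) = -1 := by field_simp
  rw [hode t, hu t, hc, huperp t, cross3_add_right', cross3_smul_right', cross3_smul_right',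
    cross3_self', cross3_triple', hdotX, h1, smul_zero, zero_add, zero_smul, one_smul, zero_sub,
    smul_smul, hββ, neg_one_smul, neg_neg]
  abel
end
end

section
/- Fix n ≥ 1, positive reals m, m₁,…,m_n (quadrotor mass and link masses) and l₁,…,l_n (link lengths). Define M_{ii} = (m + m_i/3) l_i² + Σ_{p=i+1}^n m_p l_i² for 1 ≤ i ≤ n and M_{ij} = M_{ji} = (m + m_i/2) l_i l_j + Σ_{p=i+1}^n m_p l_i l_j for 1 ≤ j < i ≤ n. Then for any vectors v₁,…,v_n ∈ ℝ³, setting w₀ = 0 and w_i = Σ_{j=1}^i l_j v_j, the identity Σ_{i=1}^n [ (1/2) m_i ‖w_{i−1}‖² + (1/2) m_i l_i (w_{i−1}·v_i) + (1/6) m_i l_i² ‖v_i‖² ] + (1/2) m ‖w_n‖² = (1/2) Σ_{i=1}^n Σ_{j=1}^n M_{ij} (v_i·v_j) holds. -/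
noncomputable section

open scoped BigOperators

/-- The inertia constants `M_{ij}` of the tethered quadrotor:
`M_{ii} = (m + mᵢ/3) lᵢ² + Σ_{p>i} m_p lᵢ²` and, for `i ≠ j`,
`M_{ij} = M_{ji} = (m + m_{max(i,j)}/2) lᵢ lⱼ + Σ_{p>max(i,j)} m_p lᵢ lⱼ`. -/
def inertiaM (n : ℕ) (m : ℝ) (mi l : Fin n → ℝ) (i j : Fin n) : ℝ :=
  if i = j then
    (m + mi i / 3) * l i ^ 2 + (∑ p ∈ Finset.univ.filter (fun p => i < p), mi p) * l i ^ 2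
  else
    (m + mi (max i j) / 2) * l i * l j
      + (∑ p ∈ Finset.univ.filter (fun p => max i j < p), mi p) * l i * l j

lemma dot3_comm (a b : V3) : dot3 a b = dot3 b a := by
  simp [dot3, mul_comm]

lemma dot3_sum_left {ι : Type*} (s : Finset ι) (f : ι → V3) (b : V3) :
    dot3 (∑ i ∈ s, f i) b = ∑ i ∈ s, dot3 (f i) b := by
  simp only [dot3, Finset.sum_apply, Finset.sum_mul]
  exact Finset.sum_comm

lemma dot3_smul_left (c : ℝ) (a b : V3) : dot3 (c • a) b = c * dot3 a b := by
  simp [dot3, Finset.mul_sum, mul_assoc]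

lemma dot3_sums {n : ℕ} (l : Fin n → ℝ) (v : Fin n → V3) (s t : Finset (Fin n)) :
    dot3 (∑ j ∈ s, l j • v j) (∑ k ∈ t, l k • v k)
      = ∑ j ∈ s, ∑ k ∈ t, (l j * l k) * dot3 (v j) (v k) := by
  rw [dot3_sum_left]
  refine Finset.sum_congr rfl fun j _ => ?_
  rw [dot3_smul_left, dot3_comm, dot3_sum_left, Finset.mul_sum]
  refine Finset.sum_congr rfl fun k _ => ?_
  rw [dot3_smul_left, dot3_comm (v k) (v j)]; ring

lemma dot3_sum_vec {n : ℕ} (l : Fin n → ℝ) (v : Fin n → V3) (s : Finset (Fin n)) (i : Fin n) :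
    dot3 (∑ j ∈ s, l j • v j) (v i) = ∑ j ∈ s, l j * dot3 (v j) (v i) := by
  rw [dot3_sum_left]
  exact Finset.sum_congr rfl fun j _ => dot3_smul_left _ _ _

lemma sum_symmetrize {n : ℕ} (C D : Fin n → Fin n → ℝ) (hD : ∀ j k, D j k = D k j) :
    ∑ j, ∑ k, C j k * D j k
      = ∑ j, ∑ k, ((1:ℝ)/2 * (C j k + C k j)) * D j k := by
  have h : ∑ j : Fin n, ∑ k : Fin n, C k j * D j k
      = ∑ j : Fin n, ∑ k : Fin n, C j k * D j k := by
    rw [Finset.sum_comm]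
    exact Finset.sum_congr rfl fun j _ => Finset.sum_congr rfl fun k _ => by rw [hD]
  have expand : ∀ j k : Fin n, ((1:ℝ)/2 * (C j k + C k j)) * D j k
      = 1/2 * (C j k * D j k) + 1/2 * (C k j * D j k) := fun j k => by ring
  simp_rw [expand, Finset.sum_add_distrib, ← Finset.mul_sum, h]
  ring

/-- Auxiliary (unsymmetrized) coefficient of `dot3 (v j) (v k)` in the kinetic energy. -/
def Ccoef (n : ℕ) (m : ℝ) (mi l : Fin n → ℝ) (j k : Fin n) : ℝ :=
  (1/2 * (∑ p ∈ Finset.univ.filter (fun p => max j k < p), mi p)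
    + (if j < k then 1/2 * mi k else 0)
    + (if j = k then 1/6 * mi j else 0)
    + 1/2 * m) * (l j * l k)

lemma half_inertia {n : ℕ} (m : ℝ) (mi l : Fin n → ℝ) (i j : Fin n) :
    (1:ℝ)/2 * inertiaM n m mi l i j
      = 1/2 * (Ccoef n m mi l i j + Ccoef n m mi l j i) := by
  rcases lt_trichotomy i j with h | h | h
  · rw [inertiaM, if_neg h.ne, Ccoef, Ccoef, if_pos h, if_neg h.ne,
      if_neg (asymm h), if_neg h.ne', max_eq_right h.le, max_eq_left h.le]
    ring
  · subst h
    rw [inertiaM, if_pos rfl, Ccoef, if_neg (lt_irrefl i), if_pos rfl, max_self]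
    ring
  · rw [inertiaM, if_neg h.ne', Ccoef, Ccoef, if_neg (asymm h), if_neg h.ne',
      if_pos h, if_neg h.ne, max_eq_left h.le, max_eq_right h.le]
    ring

/-- the total kinetic energy of the tether links and the
quadrotor's translational kinetic energy equal the quadratic form
`(1/2) Σᵢ Σⱼ M_{ij} (vᵢ·vⱼ)`, where `vᵢ` plays the role of `q̇ᵢ` and
`w_i = Σ_{j≤i} lⱼ vⱼ` that of `ẋᵢ`. -/
theorem kinetic_energy_identity (n : ℕ) (hn : 1 ≤ n)
    (m : ℝ) (mi l : Fin n → ℝ)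
    (hm : 0 < m) (hmi : ∀ i, 0 < mi i) (hl : ∀ i, 0 < l i)
    (v : Fin n → V3) :
    (∑ i : Fin n,
      ((1 / 2) * mi i * norm3 (∑ j ∈ Finset.univ.filter (fun j => j < i), l j • v j) ^ 2
        + (1 / 2) * mi i * l i
            * dot3 (∑ j ∈ Finset.univ.filter (fun j => j < i), l j • v j) (v i)
        + (1 / 6) * mi i * l i ^ 2 * norm3 (v i) ^ 2))
      + (1 / 2) * m * norm3 (∑ j : Fin n, l j • v j) ^ 2
    = (1 / 2) * ∑ i : Fin n, ∑ j : Fin n, inertiaM n m mi l i j * dot3 (v i) (v j) := by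
  -- Step 1: the RHS equals the symmetrized coefficient form.
  have key2 : ∑ j : Fin n, ∑ k : Fin n, Ccoef n m mi l j k * dot3 (v j) (v k)
      = ∑ j : Fin n, ∑ k : Fin n,
          ((1:ℝ)/2 * (Ccoef n m mi l j k + Ccoef n m mi l k j)) * dot3 (v j) (v k) :=
    sum_symmetrize _ _ (fun j k => dot3_comm _ _)
  have key3 : (1 / 2 : ℝ) * ∑ i : Fin n, ∑ j : Fin n, inertiaM n m mi l i j * dot3 (v i) (v j)
      = ∑ j : Fin n, ∑ k : Fin n,
          ((1:ℝ)/2 * (Ccoef n m mi l j k + Ccoef n m mi l k j)) * dot3 (v j) (v k) := by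
    rw [Finset.mul_sum]
    refine Finset.sum_congr rfl fun i _ => ?_
    rw [Finset.mul_sum]
    refine Finset.sum_congr rfl fun j _ => ?_
    rw [← mul_assoc, half_inertia]
  -- Step 2: split the coefficient into its four parts.
  have hsplit : ∀ j k : Fin n, Ccoef n m mi l j k * dot3 (v j) (v k)
      = (∑ i : Fin n, if max j k < i then 1/2 * mi i * ((l j * l k) * dot3 (v j) (v k)) else 0)
        + (if j < k then 1/2 * mi k * ((l j * l k) * dot3 (v j) (v k)) else 0)
        + (if j = k then 1/6 * mi j * ((l j * l k) * dot3 (v j) (v k)) else 0)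
        + 1/2 * m * ((l j * l k) * dot3 (v j) (v k)) := by
    intro j k
    have hs : (∑ i : Fin n, if max j k < i then (1:ℝ)/2 * mi i * ((l j * l k) * dot3 (v j) (v k)) else 0)
        = (∑ p ∈ Finset.univ.filter (fun p => max j k < p), mi p)
            * (1/2 * ((l j * l k) * dot3 (v j) (v k))) := by
      rw [Finset.sum_mul, ← Finset.sum_filter]
      exact Finset.sum_congr rfl fun i _ => by ring
    rw [hs, Ccoef]
    split_ifs <;> ring
  -- Step 3: compute the LHS piecewise.
  have swap13 : ∀ F : Fin n → Fin n → Fin n → ℝ,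
      (∑ i : Fin n, ∑ j : Fin n, ∑ k : Fin n, F i j k)
        = ∑ j : Fin n, ∑ k : Fin n, ∑ i : Fin n, F i j k := by
    intro F
    rw [Finset.sum_comm]
    exact Finset.sum_congr rfl fun j _ => Finset.sum_comm
  have hA1 : ∀ i : Fin n,
      (1 / 2 : ℝ) * mi i * norm3 (∑ j ∈ Finset.univ.filter (fun j => j < i), l j • v j) ^ 2
        = ∑ j : Fin n, ∑ k : Fin n,
            (if max j k < i then 1/2 * mi i * ((l j * l k) * dot3 (v j) (v k)) else 0) := by
    intro i
    rw [norm3_sq, dot3_sums, Finset.mul_sum, Finset.sum_filter]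
    refine Finset.sum_congr rfl fun j _ => ?_
    by_cases hj : j < i
    · rw [if_pos hj, Finset.mul_sum, Finset.sum_filter]
      refine Finset.sum_congr rfl fun k _ => ?_
      by_cases hk : k < i
      · rw [if_pos hk, if_pos (max_lt hj hk)]
      · rw [if_neg hk, if_neg (fun hc => hk (lt_of_le_of_lt (le_max_right j k) hc))]
    · rw [if_neg hj]
      symm; apply Finset.sum_eq_zero; intro k _
      exact if_neg (fun hc => hj (lt_of_le_of_lt (le_max_left j k) hc))
  have T1 : (∑ i : Fin n, (1 / 2 : ℝ) * mi i
        * norm3 (∑ j ∈ Finset.univ.filter (fun j => j < i), l j • v j) ^ 2)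
      = ∑ j : Fin n, ∑ k : Fin n, ∑ i : Fin n,
          (if max j k < i then 1/2 * mi i * ((l j * l k) * dot3 (v j) (v k)) else 0) := by
    rw [Finset.sum_congr rfl fun i _ => hA1 i]
    exact swap13 _
  have T2 : (∑ i : Fin n, (1 / 2 : ℝ) * mi i * l i
        * dot3 (∑ j ∈ Finset.univ.filter (fun j => j < i), l j • v j) (v i))
      = ∑ j : Fin n, ∑ k : Fin n,
          (if j < k then 1/2 * mi k * ((l j * l k) * dot3 (v j) (v k)) else 0) := by
    have : ∀ i : Fin n, (1 / 2 : ℝ) * mi i * l i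
          * dot3 (∑ j ∈ Finset.univ.filter (fun j => j < i), l j • v j) (v i)
        = ∑ j : Fin n, (if j < i then 1/2 * mi i * ((l j * l i) * dot3 (v j) (v i)) else 0) := by
      intro i
      rw [dot3_sum_vec, Finset.mul_sum, Finset.sum_filter]
      refine Finset.sum_congr rfl fun j _ => ?_
      split_ifs with h
      · ring
      · rfl
    rw [Finset.sum_congr rfl fun i _ => this i]
    exact Finset.sum_comm
  have T3 : (∑ i : Fin n, (1 / 6 : ℝ) * mi i * l i ^ 2 * norm3 (v i) ^ 2)
      = ∑ j : Fin n, ∑ k : Fin n,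
          (if j = k then 1/6 * mi j * ((l j * l k) * dot3 (v j) (v k)) else 0) := by
    refine Finset.sum_congr rfl fun j _ => ?_
    rw [Finset.sum_ite_eq, if_pos (Finset.mem_univ j), norm3_sq]
    ring
  have T4 : (1 / 2 : ℝ) * m * norm3 (∑ j : Fin n, l j • v j) ^ 2
      = ∑ j : Fin n, ∑ k : Fin n, 1/2 * m * ((l j * l k) * dot3 (v j) (v k)) := by
    rw [norm3_sq, dot3_sums, Finset.mul_sum]
    exact Finset.sum_congr rfl fun j _ => Finset.mul_sum _ _ _
  -- Assemble everything.
  rw [key3, ← key2]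
  simp only [Finset.sum_add_distrib]
  rw [T1, T2, T3, T4]
  simp only [hsplit, Finset.sum_add_distrib]
end
end

section
/- Fix n ≥ 1 and the inertia constants M_{ij} defined from masses m, m₁,…,m_n and lengths l₁,…,l_n by M_{ii} = (m + m_i/3) l_i² + Σ_{p=i+1}^n m_p l_i² and M_{ij} = M_{ji} = (m + m_i/2) l_i l_j + Σ_{p=i+1}^n m_p l_i l_j for j < i. Given unit vectors q₁,…,q_n ∈ ℝ³, let 𝓜(q) be the 3n×3n block matrix whose (i,i) block is M_{ii} I₃ and whose (i,j) block for i ≠ j is −q̂_i² M_{ij}, assume 𝓜(q) is invertible, let M^I_{ij}(q) ∈ ℝ^{3×3} denote the (i,j) block of 𝓜(q)^{−1}, and define 𝓑(q) = Σ_{i=1}^n Σ_{j=1}^n M^I_{ij}(q) l_i l_j q̂_j². If all link directions coincide, i.e., q_i = q for all i and some unit vector q ∈ ℝ³, then 𝓑(q) q = 0; in particular 𝓑(q) is not invertible when the tether is taut. -/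
noncomputable section

open scoped BigOperators

open Matrix

/-- The hat map: `hat3 v` is the skew-symmetric matrix with `hat3 v *ᵥ w = v × w`. -/
def hat3 (v : V3) : Matrix (Fin 3) (Fin 3) ℝ :=
  !![0, -v 2, v 1; v 2, 0, -v 0; -v 1, v 0, 0]

/-- The `3n × 3n` block inertia matrix `𝓜(q)`: the `(i,i)` block is `M_{ii} I₃`
and the `(i,j)` block for `i ≠ j` is `−q̂ᵢ² M_{ij}`. -/
def bigM (n : ℕ) (m : ℝ) (mi l : Fin n → ℝ) (qv : Fin n → V3) :
    Matrix (Fin n × Fin 3) (Fin n × Fin 3) ℝ :=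
  Matrix.of fun p r =>
    if p.1 = r.1 then (if p.2 = r.2 then inertiaM n m mi l p.1 p.1 else 0)
    else -(inertiaM n m mi l p.1 r.1) * ((hat3 (qv p.1) * hat3 (qv p.1)) p.2 r.2)

/-- The input matrix `𝓑(q) = Σᵢ Σⱼ M^I_{ij}(q) lᵢ lⱼ q̂ⱼ²`, where `M^I_{ij}(q)`
is the `(i,j)` block of `𝓜(q)⁻¹`. -/
def bigB (n : ℕ) (m : ℝ) (mi l : Fin n → ℝ) (qv : Fin n → V3) :
    Matrix (Fin 3) (Fin 3) ℝ :=
  ∑ i : Fin n, ∑ j : Fin n, (l i * l j) •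
    ((Matrix.of fun a b => (bigM n m mi l qv)⁻¹ (i, a) (j, b))
      * (hat3 (qv j) * hat3 (qv j)))

/-- if all the link directions coincide (the tether is taut),
then the input matrix `𝓑(q)` annihilates the common direction `q`; in
particular it is not invertible. -/
theorem bigB_singular_when_taut (n : ℕ) (hn : 1 ≤ n)
    (m : ℝ) (mi l : Fin n → ℝ) (qv : Fin n → V3) (q : V3)
    (hunit : ∀ i, norm3 (qv i) = 1)
    (hM : IsUnit (bigM n m mi l qv))
    (htaut : ∀ i, qv i = q) :
    (bigB n m mi l qv) *ᵥ q = 0 ∧ ¬ IsUnit (bigB n m mi l qv) := by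
  have hhat : ∀ v : V3, hat3 v *ᵥ v = 0 := by
    intro v
    funext k
    fin_cases k <;>
      simp [hat3, Matrix.mulVec, dotProduct, Fin.sum_univ_three] <;> ring
  have hsum : ∀ {ι : Type} (s : Finset ι) (f : ι → Matrix (Fin 3) (Fin 3) ℝ) (v : V3),
      (∑ i ∈ s, f i) *ᵥ v = ∑ i ∈ s, f i *ᵥ v := by
    intro ι s f v
    induction s using Finset.cons_induction with
    | empty => simp
    | cons a s ha ih => simp [Matrix.add_mulVec, ih]
  have hzero : (bigB n m mi l qv) *ᵥ q = 0 := by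
    unfold bigB
    rw [hsum]
    apply Finset.sum_eq_zero
    intro i _
    rw [hsum]
    apply Finset.sum_eq_zero
    intro j _
    rw [Matrix.smul_mulVec, ← Matrix.mulVec_mulVec, ← Matrix.mulVec_mulVec,
      htaut j, hhat]
    simp
  refine ⟨hzero, ?_⟩
  intro hunit'
  have hq0 : q ≠ 0 := by
    intro h
    have i0 : Fin n := ⟨0, hn⟩
    have := hunit i0
    rw [htaut i0, h] at this
    simp [norm3, dot3] at this
  obtain ⟨u, hu⟩ := hunit'
  have : q = 0 := by
    have h1 : (↑u⁻¹ : Matrix (Fin 3) (Fin 3) ℝ) *ᵥ ((u : Matrix (Fin 3) (Fin 3) ℝ) *ᵥ q) = 0 := by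
      rw [hu, hzero, Matrix.mulVec_zero]
    rwa [Matrix.mulVec_mulVec, u.inv_mul, Matrix.one_mulVec] at h1
  exact hq0 this
end
end

section
/- Let m, l₁ > 0 and g ∈ ℝ. Let q, ω : ℝ → ℝ³ be differentiable with ‖q(t)‖ = 1, q·ω = 0, and q̇ = ω × q for all t, with q twice differentiable, and let u : ℝ → ℝ³ be arbitrary. Define the quadrotor position x = l₁ q and the internal force λ = m ẍ − u − m g e₃ (from Newton's second law m ẍ = u + m g e₃ + λ). Then the tension T := −λ·q satisfies T = m g (q·e₃) + m l₁ ‖ω‖² + q·u for all t. In particular, T depends on u only through its component parallel to q. -/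
noncomputable section

open scoped BigOperators

lemma dot3_expand (a b : V3) : dot3 a b = a 0 * b 0 + a 1 * b 1 + a 2 * b 2 := by
  simp [dot3, Fin.sum_univ_three]

/-- expression of the tether tension. With quadrotor position
`x = l₁ q`, internal force `λ = m ẍ − u − m g e₃`, the tension `T = −λ·q`
satisfies `T = m g (q·e₃) + m l₁ ‖ω‖² + q·u`; in particular `T` depends on the
thrust `u` only through its component parallel to `q`. -/
theorem tension_formula (m l1 g : ℝ) (hm : 0 < m) (hl1 : 0 < l1)
    (q ω : ℝ → V3) (u : ℝ → V3)
    (hq : Differentiable ℝ q) (hω : Differentiable ℝ ω)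
    (hq' : Differentiable ℝ (deriv q))
    (hunit : ∀ t, norm3 (q t) = 1)
    (hperp : ∀ t, dot3 (q t) (ω t) = 0)
    (hkin : ∀ t, deriv q t = cross3 (ω t) (q t)) :
    (∀ t : ℝ,
      -dot3 (m • deriv (deriv (fun s => l1 • q s)) t - u t - (m * g) • e3) (q t)
        = m * g * dot3 (q t) e3 + m * l1 * norm3 (ω t) ^ 2 + dot3 (q t) (u t)) ∧
    (∀ u' : ℝ → V3, ∀ t : ℝ, dot3 (q t) (u t) = dot3 (q t) (u' t) →
      -dot3 (m • deriv (deriv (fun s => l1 • q s)) t - u t - (m * g) • e3) (q t)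
        = -dot3 (m • deriv (deriv (fun s => l1 • q s)) t - u' t - (m * g) • e3) (q t)) := by
  have hqd : ∀ t, HasDerivAt q (deriv q t) t := fun t => (hq t).hasDerivAt
  have hq'd : ∀ t, HasDerivAt (deriv q) (deriv (deriv q) t) t := fun t => (hq' t).hasDerivAt
  have hqc : ∀ t i, HasDerivAt (fun s => q s i) (deriv q t i) t :=
    fun t i => (hasDerivAt_pi.mp (hqd t)) i
  have hq'c : ∀ t i, HasDerivAt (fun s => deriv q s i) (deriv (deriv q) t i) t :=
    fun t i => (hasDerivAt_pi.mp (hq'd t)) i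
  have hqq : ∀ t, dot3 (q t) (q t) = 1 := by
    intro t
    have h := hunit t
    simp only [norm3] at h
    have hnn := dot3_self_nonneg (q t)
    nlinarith [Real.sq_sqrt hnn]
  have hqq' : ∀ t, dot3 (q t) (deriv q t) = 0 := by
    intro t
    have hc : HasDerivAt (fun s => dot3 (q s) (q s))
        (deriv q t 0 * q t 0 + q t 0 * deriv q t 0 +
         (deriv q t 1 * q t 1 + q t 1 * deriv q t 1) +
         (deriv q t 2 * q t 2 + q t 2 * deriv q t 2)) t := by
      simp only [dot3_expand]
      exact (((hqc t 0).mul (hqc t 0)).add ((hqc t 1).mul (hqc t 1))).add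
        ((hqc t 2).mul (hqc t 2))
    have hconst : HasDerivAt (fun s => dot3 (q s) (q s)) 0 t := by
      have he : (fun s => dot3 (q s) (q s)) = fun _ => (1:ℝ) := funext fun s => hqq s
      rw [he]; exact hasDerivAt_const t 1
    have huniq := hc.unique hconst
    rw [dot3_expand]; linarith
  have hkey : ∀ t, dot3 (q t) (deriv (deriv q) t) = -(dot3 (deriv q t) (deriv q t)) := by
    intro t
    have hc : HasDerivAt (fun s => dot3 (q s) (deriv q s))
        (deriv q t 0 * deriv q t 0 + q t 0 * deriv (deriv q) t 0 +
         (deriv q t 1 * deriv q t 1 + q t 1 * deriv (deriv q) t 1) +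
         (deriv q t 2 * deriv q t 2 + q t 2 * deriv (deriv q) t 2)) t := by
      simp only [dot3_expand]
      exact (((hqc t 0).mul (hq'c t 0)).add ((hqc t 1).mul (hq'c t 1))).add
        ((hqc t 2).mul (hq'c t 2))
    have hconst : HasDerivAt (fun s => dot3 (q s) (deriv q s)) 0 t := by
      have he : (fun s => dot3 (q s) (deriv q s)) = fun _ => (0:ℝ) := funext fun s => hqq' s
      rw [he]; exact hasDerivAt_const t 0
    have huniq := hc.unique hconst
    rw [dot3_expand, dot3_expand]; linarith
  have hωω : ∀ t, dot3 (deriv q t) (deriv q t) = dot3 (ω t) (ω t) := by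
    intro t
    have h1 := hqq t
    have h2 := hperp t
    rw [hkin t]
    simp only [dot3_expand, cross3, Matrix.cons_val_zero, Matrix.cons_val_one,
      Matrix.head_cons, Matrix.cons_val_two, Matrix.tail_cons] at h1 h2 ⊢
    linear_combination (ω t 0 ^ 2 + ω t 1 ^ 2 + ω t 2 ^ 2) * h1 -
      (q t 0 * ω t 0 + q t 1 * ω t 1 + q t 2 * ω t 2) * h2
  have hD : ∀ t, deriv (deriv (fun s => l1 • q s)) t = l1 • deriv (deriv q) t := by
    have h1 : deriv (fun s => l1 • q s) = fun s => l1 • deriv q s := by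
      funext t; exact ((hqd t).const_smul l1).deriv
    intro t
    rw [h1]
    exact ((hq'd t).const_smul l1).deriv
  have main : ∀ (t : ℝ) (v : V3),
      -dot3 (m • deriv (deriv (fun s => l1 • q s)) t - v - (m * g) • e3) (q t)
        = m * g * dot3 (q t) e3 + m * l1 * norm3 (ω t) ^ 2 + dot3 (q t) v := by
    intro t v
    rw [hD t]
    have h1 := hkey t
    have h2 := hωω t
    have h3 : norm3 (ω t) ^ 2 = dot3 (ω t) (ω t) := Real.sq_sqrt (dot3_self_nonneg _)
    rw [h3]
    simp only [dot3_expand, Pi.smul_apply, Pi.sub_apply, smul_eq_mul, e3,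
      Matrix.cons_val_zero, Matrix.cons_val_one, Matrix.head_cons,
      Matrix.cons_val_two, Matrix.tail_cons] at h1 h2 ⊢
    linear_combination (-(m * l1)) * h1 + (m * l1) * h2
  refine ⟨fun t => main t (u t), fun u' t h => ?_⟩
  rw [main t (u t), main t (u' t), h]
end
end
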